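/- Let (Γ, ψ) be a GBS graph and let (Γ, ψ′) be obtained from (Γ, ψ) by an induction move. Then there is a finite sequence of GBS graphs starting at (Γ, ψ) and ending at a GBS graph isomorphic to (Γ, ψ′) as a labelled graph, in which each graph is obtained from the previous one by an elementary expansion, an elementary contraction, or a slide move, and in which every GBS graph occurring in the sequence has at most |V(Γ)| + 1 vertices. -/

import Mathlib

/-- The abelian group `A := ℤ/2ℤ ⊕ ⊕_{i≥1} ℤ`. -/
abbrev A : Type := ZMod 2 × (ℕ →₀ ℤ)

/-- `a ∈ A⁺`. -/
def Apos (a : A) : Prop := ∀ i : ℕ, 0 ≤ a.2 i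

/-- The support of an element of `A` (ignoring the `ℤ/2ℤ` component). -/
def suppA (a : A) : Finset ℕ := a.2.support

/-- `vec z ∈ A⁺` for `z ∈ ℤ∖{0}`: the `ℤ/2ℤ` component records the sign of `z`,
and the `i`-th coordinate (`i : ℕ`, corresponding to the `(i+1)`-st prime) is the
exponent of the `(i+1)`-st prime `Nat.nth Nat.Prime i` in the factorization of `|z|`. -/
noncomputable def vec (z : ℤ) : A :=
  (if 0 < z then 0 else 1,
    Finsupp.comapDomain (Nat.nth Nat.Prime)
      (z.natAbs.factorization.mapRange (fun n : ℕ => (n : ℤ)) (by simp))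
      ((Nat.nth_injective Nat.infinite_setOf_prime).injOn))

/-- A GBS graph: a finite graph in the sense of Serre (vertex set `V`, edge set
`E`, fixed-point-free involution `bar`, initial-vertex map `ini`), together with
a labelling of the edges by nonzero integers. -/
structure GBSGraph (V E : Type) : Type where
  bar : E → E
  bar_ne : ∀ e, bar e ≠ e
  bar_invol : ∀ e, bar (bar e) = e
  ini : E → V
  label : E → ℤ
  label_ne : ∀ e, label e ≠ 0

namespace GBSGraph

variable {V E : Type}

/-- Terminal vertex of an edge. -/
def ter (G : GBSGraph V E) (e : E) : V := G.ini (G.bar e)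

/-- Initial endpoint of an edge in the affine representation: `(ι(e), vec(ψ(ē)))`. -/
noncomputable def affI (G : GBSGraph V E) (e : E) : V × A :=
  (G.ini e, vec (G.label (G.bar e)))

/-- Terminal endpoint of an edge in the affine representation: `(τ(e), vec(ψ(e)))`. -/
noncomputable def affT (G : GBSGraph V E) (e : E) : V × A :=
  (G.ter e, vec (G.label e))

/-- One step of an affine path: there is an edge `e` and a translation `w ∈ A⁺`
with `ιΛ(e) + w = p` and `τΛ(e) + w = q`. -/
def AffStep (G : GBSGraph V E) (p q : V × A) : Prop :=
  ∃ (e : E) (w : A), Apos w ∧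
    ((G.affI e).1, (G.affI e).2 + w) = p ∧ ((G.affT e).1, (G.affT e).2 + w) = q

/-- Conjugacy of points of the affine representation: reachability by affine paths. -/
def Conj (G : GBSGraph V E) : V × A → V × A → Prop :=
  Relation.ReflTransGen (AffStep G)

/-- A vertex `v` is redundant if `(v, 0)` is conjugate to a point `(u, b)` with
`u ≠ v`. -/
def Redundant (G : GBSGraph V E) (v : V) : Prop :=
  ∃ (u : V) (b : A), u ≠ v ∧ Apos b ∧ G.Conj (v, 0) (u, b)

/-- A set of collapsing data for a vertex `v`: pairwise distinct edges
`es 0, …, es (n−1), e` such that each `es j` goes from `(v, a_j)` to `(v, b_j)`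
with `supp(a_j) ⊆ supp(b_0) ∪ … ∪ supp(b_{j−1})`, and `e` goes from `(v, c)` to
`(u, d)` with `u ≠ v` and `supp(c) ⊆ supp(b_0) ∪ … ∪ supp(b_{n−1})`. -/
def CollapsingData (G : GBSGraph V E) (v : V) (n : ℕ) (es : Fin n → E) (e : E) : Prop :=
  Function.Injective es ∧ (∀ i, es i ≠ e) ∧
  (∀ i, G.ini (es i) = v ∧ G.ter (es i) = v) ∧
  (∀ j : Fin n, suppA (vec (G.label (G.bar (es j)))) ⊆
    (Finset.univ.filter fun i : Fin n => i < j).biUnion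
      fun i => suppA (vec (G.label (es i)))) ∧
  G.ini e = v ∧ G.ter e ≠ v ∧
  suppA (vec (G.label (G.bar e))) ⊆
    Finset.univ.biUnion fun i : Fin n => suppA (vec (G.label (es i)))

end GBSGraph

namespace GBSGraph

variable {V E V' E' : Type}

/-- A GBS graph is totally reduced if (1) `(v,0) ∼ (u,b)` implies `u = v`, and
(2) every vertex `v` carries an edge with endpoints `(v, 0)` and `(v, w)` in the
affine representation such that `supp b ⊆ supp w` whenever `(v,0) ∼ (v,b)`. -/
def TotallyReduced (G : GBSGraph V E) : Prop :=
  (∀ (v u : V) (b : A), Apos b → G.Conj (v, 0) (u, b) → u = v) ∧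
  (∀ v : V, ∃ (e : E) (w : A), Apos w ∧
    ((G.affI e = (v, 0) ∧ G.affT e = (v, w)) ∨
      (G.affI e = (v, w) ∧ G.affT e = (v, 0))) ∧
    ∀ b : A, Apos b → G.Conj (v, 0) (v, b) → suppA b ⊆ suppA w)

/-- Vertex sign-change at a vertex `v`. -/
def VSignMove (G G' : GBSGraph V E) : Prop :=
  ∃ v : V, G'.bar = G.bar ∧ G'.ini = G.ini ∧
    (∀ e, G.ter e = v → G'.label e = -G.label e) ∧
    (∀ e, G.ter e ≠ v → G'.label e = G.label e)

/-- Edge sign-change at an edge `d`. -/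
def ESignMove (G G' : GBSGraph V E) : Prop :=
  ∃ d : E, G'.bar = G.bar ∧ G'.ini = G.ini ∧
    G'.label d = -G.label d ∧ G'.label (G.bar d) = -G.label (G.bar d) ∧
    (∀ e, e ≠ d → e ≠ G.bar d → G'.label e = G.label e)

/-- Slide move: slide the edge `d` (with `τ(d) = ι(e)`, `ψ(d) = ℓ·ψ(ē)`) across
the edge `e`; the new edge `d'` (identified with `d`) has `ι(d') = ι(d)`,
`τ(d') = τ(e)`, `ψ(d̄') = ψ(d̄)`, `ψ(d') = ℓ·ψ(e)`. -/
def SlideMove (G G' : GBSGraph V E) : Prop :=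
  ∃ (d e : E) (ℓ : ℤ),
    d ≠ e ∧ d ≠ G.bar e ∧ G.ter d = G.ini e ∧ ℓ ≠ 0 ∧
    G.label d = ℓ * G.label (G.bar e) ∧
    G'.bar = G.bar ∧
    (∀ f, f ≠ G.bar d → G'.ini f = G.ini f) ∧
    G'.ini (G.bar d) = G.ter e ∧
    (∀ f, f ≠ d → G'.label f = G.label f) ∧
    G'.label d = ℓ * G.label e

/-- Induction move: given a loop `e` at `v` with `ψ(ē) = 1`, `ψ(e) = n`, and
`ℓ ∣ n^k`, multiply by `ℓ` the label `ψ(d)` of every edge `d ∉ {e, ē}` with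
`τ(d) = v`. -/
def InductionMove (G G' : GBSGraph V E) : Prop :=
  ∃ (e : E) (ℓ : ℤ) (k : ℕ),
    G.ini e = G.ter e ∧ G.label (G.bar e) = 1 ∧ ℓ ≠ 0 ∧ ℓ ∣ G.label e ^ k ∧
    G'.bar = G.bar ∧ G'.ini = G.ini ∧
    (∀ d, d ≠ e → d ≠ G.bar e → G.ter d = G.ter e → G'.label d = ℓ * G.label d) ∧
    (∀ d, d = e ∨ d = G.bar e ∨ G.ter d ≠ G.ter e → G'.label d = G.label d)

/-- Swap move on two loops `e₁, e₂` at a common vertex `v`. -/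
def SwapMove (G G' : GBSGraph V E) : Prop :=
  ∃ (e₁ e₂ : E) (n m ℓ₁ ℓ₂ : ℤ) (k₁ k₂ : ℕ),
    e₂ ≠ e₁ ∧ e₂ ≠ G.bar e₁ ∧
    G.ini e₁ = G.ter e₁ ∧ G.ini e₂ = G.ini e₁ ∧ G.ter e₂ = G.ini e₁ ∧
    n ≠ 0 ∧ m ≠ 0 ∧ ℓ₁ ≠ 0 ∧ ℓ₂ ≠ 0 ∧
    G.label (G.bar e₁) = n ∧ G.label e₁ = ℓ₁ * n ∧
    G.label (G.bar e₂) = m ∧ G.label e₂ = ℓ₂ * m ∧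
    n ∣ m ∧ m ∣ ℓ₁ ^ k₁ * n ∧ m ∣ ℓ₂ ^ k₂ * n ∧
    G'.bar = G.bar ∧ G'.ini = G.ini ∧
    G'.label (G.bar e₁) = m ∧ G'.label e₁ = ℓ₁ * m ∧
    G'.label (G.bar e₂) = n ∧ G'.label e₂ = ℓ₂ * n ∧
    (∀ f, f ≠ e₁ → f ≠ G.bar e₁ → f ≠ e₂ → f ≠ G.bar e₂ → G'.label f = G.label f)

/-- Connection move on an edge `d` from `u` to `v` and a loop `e` at `v`. -/
def ConnectionMove (G G' : GBSGraph V E) : Prop :=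
  ∃ (d e : E) (m n ℓ₁ ℓ₂ ℓ : ℤ) (k : ℕ),
    d ≠ e ∧ d ≠ G.bar e ∧
    G.ter d = G.ini e ∧ G.ter e = G.ini e ∧
    m ≠ 0 ∧ n ≠ 0 ∧ ℓ₁ ≠ 0 ∧ ℓ₂ ≠ 0 ∧ ℓ ≠ 0 ∧
    G.label (G.bar d) = m ∧ G.label d = ℓ₁ * n ∧
    G.label (G.bar e) = n ∧ G.label e = ℓ * n ∧
    ℓ₁ * ℓ₂ = ℓ ^ k ∧
    G'.bar = G.bar ∧
    G'.ini d = G.ini e ∧ G'.ini (G.bar d) = G.ini d ∧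
    G'.ini e = G.ini d ∧ G'.ini (G.bar e) = G.ini d ∧
    (∀ f, f ≠ d → f ≠ G.bar d → f ≠ e → f ≠ G.bar e → G'.ini f = G.ini f) ∧
    G'.label (G.bar d) = n ∧ G'.label d = ℓ₂ * m ∧
    G'.label (G.bar e) = m ∧ G'.label e = ℓ * m ∧
    (∀ f, f ≠ d → f ≠ G.bar d → f ≠ e → f ≠ G.bar e → G'.label f = G.label f)

/-- An isomorphism of labelled graphs between two GBS graphs. -/
def LabelledIso (G : GBSGraph V E) (H : GBSGraph V' E') : Prop :=
  ∃ (fV : V ≃ V') (fE : E ≃ E'),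
    (∀ e, fE (G.bar e) = H.bar (fE e)) ∧
    (∀ e, fV (G.ini e) = H.ini (fE e)) ∧
    (∀ e, G.label e = H.label (fE e))

end GBSGraph

namespace GBSGraph

variable {V E : Type}

/-- Elementary expansion: add a new vertex `v₀` (encoded `none : Option V`) and a
new edge `e₀` (encoded `Sum.inr true`, with reverse `Sum.inr false`) from `v₀` to
the existing vertex `v`, with `ψ(ē₀) = 1` and `ψ(e₀) = k`. -/
def expand (G : GBSGraph V E) (v : V) (k : ℤ) (hk : k ≠ 0) :
    GBSGraph (Option V) (E ⊕ Bool) where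
  bar := Sum.elim (fun e => Sum.inl (G.bar e)) fun b => Sum.inr (!b)
  bar_ne := by
    rintro (e | b)
    · simpa using G.bar_ne e
    · cases b <;> simp
  bar_invol := by
    rintro (e | b)
    · simp [G.bar_invol e]
    · cases b <;> simp
  ini := Sum.elim (fun e => some (G.ini e)) fun b => if b then none else some v
  label := Sum.elim (fun e => G.label e) fun b => if b then k else 1
  label_ne := by
    rintro (e | b)
    · simpa using G.label_ne e
    · cases b <;> simp [hk]

/-- Elementary contraction: remove a vertex `v₀` carrying a unique edge `e₀` with
`ι(e₀) = v₀`, `τ(e₀) ≠ v₀` and `ψ(ē₀) = 1` (this is the inverse of an elementary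
expansion). -/
def contract (G : GBSGraph V E) (v₀ : V) (e₀ : E)
    (h2 : ∀ e, G.ini e = v₀ → e = e₀) :
    GBSGraph {v : V // v ≠ v₀} {e : E // e ≠ e₀ ∧ e ≠ G.bar e₀} where
  bar := fun f => ⟨G.bar f.1, by
    refine ⟨fun h => f.2.2 ((G.bar_invol f.1).symm.trans (congrArg G.bar h)),
      fun h => f.2.1 ?_⟩
    have h' := congrArg G.bar h
    rwa [G.bar_invol, G.bar_invol] at h'⟩
  bar_ne := fun f h => G.bar_ne f.1 (congrArg Subtype.val h)
  bar_invol := fun f => Subtype.ext (G.bar_invol f.1)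
  ini := fun f => ⟨G.ini f.1, fun h => f.2.1 (h2 f.1 h)⟩
  label := fun f => G.label f.1
  label_ne := fun f => G.label_ne f.1

end GBSGraph

instance optionFinite {V : Type} [Finite V] : Finite (Option V) :=
  Finite.of_equiv (V ⊕ PUnit.{1}) (Equiv.optionEquivSumPUnit V).symm

/-- A GBS graph bundled with its (finite) vertex and edge types. -/
structure BGBS : Type 1 where
  V : Type
  E : Type
  finV : Finite V
  finE : Finite E
  gr : GBSGraph V E

/-- One step for Lemma 4.1: an elementary expansion, an elementary contraction,
or a slide. -/
inductive Step18 : BGBS → BGBS → Prop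
  | slide {V E : Type} [Finite V] [Finite E] (G G' : GBSGraph V E)
      (h : GBSGraph.SlideMove G G') :
      Step18 ⟨V, E, inferInstance, inferInstance, G⟩
        ⟨V, E, inferInstance, inferInstance, G'⟩
  | expand {V E : Type} [Finite V] [Finite E] (G : GBSGraph V E) (v : V)
      (k : ℤ) (hk : k ≠ 0) :
      Step18 ⟨V, E, inferInstance, inferInstance, G⟩
        ⟨Option V, E ⊕ Bool, inferInstance, inferInstance, G.expand v k hk⟩
  | contract {V E : Type} [Finite V] [Finite E] (G : GBSGraph V E) (v₀ : V) (e₀ : E)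
      (h1 : G.ini e₀ = v₀) (h2 : ∀ e, G.ini e = v₀ → e = e₀)
      (h3 : G.ter e₀ ≠ v₀) (h4 : G.label (G.bar e₀) = 1) :
      Step18 ⟨V, E, inferInstance, inferInstance, G⟩
        ⟨{v : V // v ≠ v₀}, {e : E // e ≠ e₀ ∧ e ≠ G.bar e₀},
          inferInstance, inferInstance, G.contract v₀ e₀ h2⟩

namespace GBSGraph

attribute [local instance] Classical.propDecidable

theorem gbs_ext {V E : Type} {G H : GBSGraph V E} (hbar : G.bar = H.bar)
    (hini : G.ini = H.ini) (hlabel : G.label = H.label) : G = H := by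
  cases G; cases H
  cases hbar; cases hini; cases hlabel
  rfl

/-- The result of an induction move: multiply by `ℓ` the label of every
edge-end at `v` other than the two ends of the loop `e`. -/
noncomputable def indG {V E : Type} (G : GBSGraph V E) (v : V) (e : E) (ℓ : ℤ)
    (hl : ℓ ≠ 0) : GBSGraph V E where
  bar := G.bar
  bar_ne := G.bar_ne
  bar_invol := G.bar_invol
  ini := G.ini
  label d := if d ≠ e ∧ d ≠ G.bar e ∧ G.ter d = v then ℓ * G.label d else G.label d
  label_ne d := by
    split_ifs
    exacts [mul_ne_zero hl (G.label_ne d), G.label_ne d]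

variable {V E V' E' V'' E'' : Type}

@[simp] lemma indG_bar (G : GBSGraph V E) (v e ℓ hl) : (indG G v e ℓ hl).bar = G.bar := rfl
@[simp] lemma indG_ini (G : GBSGraph V E) (v e ℓ hl) : (indG G v e ℓ hl).ini = G.ini := rfl
@[simp] lemma indG_ter (G : GBSGraph V E) (v e ℓ hl) (d : E) :
    (indG G v e ℓ hl).ter d = G.ter d := rfl
lemma indG_label (G : GBSGraph V E) (v e ℓ hl) (d : E) :
    (indG G v e ℓ hl).label d =
      if d ≠ e ∧ d ≠ G.bar e ∧ G.ter d = v then ℓ * G.label d else G.label d := rfl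

lemma indG_indG (G : GBSGraph V E) (v : V) (e : E) (ℓ₁ ℓ₂ : ℤ) (h₁ : ℓ₁ ≠ 0)
    (h₂ : ℓ₂ ≠ 0) :
    indG (indG G v e ℓ₁ h₁) v e ℓ₂ h₂ = indG G v e (ℓ₁ * ℓ₂) (mul_ne_zero h₁ h₂) := by
  refine gbs_ext rfl rfl (funext fun d => ?_)
  show (if d ≠ e ∧ d ≠ G.bar e ∧ G.ter d = v then ℓ₂ * (indG G v e ℓ₁ h₁).label d
      else (indG G v e ℓ₁ h₁).label d) = _
  rw [indG_label, indG_label]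
  split_ifs with h
  · ring
  · rfl

/-- Pointwise form of a labelled-graph isomorphism along a given pair of
equivalences. -/
def PIso (H : GBSGraph V' E') (K : GBSGraph V E) (fV : V' ≃ V) (fE : E' ≃ E) : Prop :=
  (∀ g, fE (H.bar g) = K.bar (fE g)) ∧ (∀ g, fV (H.ini g) = K.ini (fE g)) ∧
  (∀ g, H.label g = K.label (fE g))

lemma PIso.trans {H : GBSGraph V'' E''} {K : GBSGraph V' E'} {L : GBSGraph V E}
    {fV fE gV gE} (h1 : PIso H K fV fE) (h2 : PIso K L gV gE) :
    PIso H L (fV.trans gV) (fE.trans gE) := by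
  obtain ⟨b1, i1, l1⟩ := h1
  obtain ⟨b2, i2, l2⟩ := h2
  refine ⟨fun g => ?_, fun g => ?_, fun g => ?_⟩ <;>
    simp [b1, i1, l1, b2, i2, l2]

lemma PIso.ter {H : GBSGraph V' E'} {K : GBSGraph V E} {fV fE}
    (h : PIso H K fV fE) (g : E') : fV (H.ter g) = K.ter (fE g) := by
  obtain ⟨b, i, l⟩ := h
  rw [GBSGraph.ter, GBSGraph.ter, i, b]

lemma PIso.indG_congr {H : GBSGraph V' E'} {K : GBSGraph V E} {fV fE}
    (h : PIso H K fV fE) (v' : V') (e' : E') (v : V) (e : E) (ℓ : ℤ) (hl : ℓ ≠ 0)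
    (hv : fV v' = v) (he : fE e' = e) :
    PIso (indG H v' e' ℓ hl) (indG K v e ℓ hl) fV fE := by
  obtain ⟨b, i, l⟩ := h
  refine ⟨b, i, fun g => ?_⟩
  rw [indG_label, indG_label]
  have hc : (g ≠ e' ∧ g ≠ H.bar e' ∧ H.ter g = v') ↔
      (fE g ≠ e ∧ fE g ≠ K.bar e ∧ K.ter (fE g) = v) := by
    subst hv he
    rw [← b, ← PIso.ter ⟨b, i, l⟩ g]
    simp [fE.injective.ne_iff, fV.injective.eq_iff]
  split_ifs with h1 h2 h2
  · rw [l]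
  · exact absurd (hc.mp h1) h2
  · exact absurd (hc.mpr h2) h1
  · exact l g

end GBSGraph
namespace GBSGraph

attribute [local instance] Classical.propDecidable

section Stage

variable {V E : Type} (G : GBSGraph V E) (v : V) (e : E) (ℓ c : ℤ)

/-- The set of edges (other than the loop `e` and its reverse) whose terminal
vertex is `v`. -/
def Dset : Set E := {d | G.ter d = v ∧ d ≠ e ∧ d ≠ G.bar e}

/-- Intermediate graph: expansion at `v` with label `c`, after the edges in `S`
have been slid (around the loop and across the new edge) to the new vertex. -/
noncomputable def mid (hl : ℓ ≠ 0) (hc : c ≠ 0) (S : Set E) :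
    GBSGraph (Option V) (E ⊕ Bool) :=
  { G.expand v c hc with
    ini := Sum.elim (fun d => if G.bar d ∈ S then none else some (G.ini d))
      (fun b => if b then none else some v)
    label := Sum.elim (fun d => if d ∈ S then ℓ * G.label d else G.label d)
      (fun b => if b then c else 1)
    label_ne := by
      rintro (d | b)
      · dsimp only [Sum.elim_inl]
        split_ifs
        exacts [mul_ne_zero hl (G.label_ne d), G.label_ne d]
      · cases b <;> simp [hc] }

/-- Intermediate graph between the two slides moving the edge `d0`. -/
noncomputable def mid2 (hl : ℓ ≠ 0) (hc : c ≠ 0) (S : Set E) (d0 : E) :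
    GBSGraph (Option V) (E ⊕ Bool) :=
  { G.expand v c hc with
    ini := Sum.elim (fun d => if G.bar d ∈ S then none else some (G.ini d))
      (fun b => if b then none else some v)
    label := Sum.elim
      (fun d => if d = d0 then ℓ * G.label d0 * c
        else if d ∈ S then ℓ * G.label d else G.label d)
      (fun b => if b then c else 1)
    label_ne := by
      rintro (d | b)
      · dsimp only [Sum.elim_inl]
        split_ifs
        exacts [mul_ne_zero (mul_ne_zero hl (G.label_ne d0)) hc,
          mul_ne_zero hl (G.label_ne d), G.label_ne d]
      · cases b <;> simp [hc] }

/-- The graph after the loop `e` has been slid onto the new vertex. -/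
noncomputable def mid3 (hl : ℓ ≠ 0) (hc : c ≠ 0) :
    GBSGraph (Option V) (E ⊕ Bool) :=
  { G.expand v c hc with
    ini := Sum.elim
      (fun d => if d = G.bar e then none
        else if G.bar d ∈ Dset G v e then none else some (G.ini d))
      (fun b => if b then none else some v)
    label := Sum.elim
      (fun d => if d = e then ℓ
        else if d ∈ Dset G v e then ℓ * G.label d else G.label d)
      (fun b => if b then c else 1)
    label_ne := by
      rintro (d | b)
      · dsimp only [Sum.elim_inl]
        split_ifs
        exacts [hl, mul_ne_zero hl (G.label_ne d), G.label_ne d]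
      · cases b <;> simp [hc] }

/-- The graph after the expansion edge has been slid into a loop at the new
vertex. -/
noncomputable def mid4 (hl : ℓ ≠ 0) (hc : c ≠ 0) :
    GBSGraph (Option V) (E ⊕ Bool) :=
  { G.expand v c hc with
    ini := Sum.elim
      (fun d => if d = G.bar e then none
        else if G.bar d ∈ Dset G v e then none else some (G.ini d))
      (fun _ => none)
    label := Sum.elim
      (fun d => if d = e then ℓ
        else if d ∈ Dset G v e then ℓ * G.label d else G.label d)
      (fun b => if b then c * ℓ else 1)
    label_ne := by
      rintro (d | b)
      · dsimp only [Sum.elim_inl]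
        split_ifs
        exacts [hl, mul_ne_zero hl (G.label_ne d), G.label_ne d]
      · cases b <;> simp [hc, hl] }

variable {hl : ℓ ≠ 0} {hc : c ≠ 0} {S : Set E} {d0 : E}

@[simp] lemma mid_bar_inl (d : E) :
    (mid G v ℓ c hl hc S).bar (.inl d) = .inl (G.bar d) := rfl
@[simp] lemma mid_bar_inr (b : Bool) :
    (mid G v ℓ c hl hc S).bar (.inr b) = .inr (!b) := rfl
@[simp] lemma mid_ini_inl (d : E) :
    (mid G v ℓ c hl hc S).ini (.inl d) =
      if G.bar d ∈ S then none else some (G.ini d) := rfl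
@[simp] lemma mid_ini_inr (b : Bool) :
    (mid G v ℓ c hl hc S).ini (.inr b) = if b then none else some v := rfl
@[simp] lemma mid_label_inl (d : E) :
    (mid G v ℓ c hl hc S).label (.inl d) =
      if d ∈ S then ℓ * G.label d else G.label d := rfl
@[simp] lemma mid_label_inr (b : Bool) :
    (mid G v ℓ c hl hc S).label (.inr b) = if b then c else 1 := rfl

@[simp] lemma mid2_bar_inl (d : E) :
    (mid2 G v ℓ c hl hc S d0).bar (.inl d) = .inl (G.bar d) := rfl
@[simp] lemma mid2_bar_inr (b : Bool) :
    (mid2 G v ℓ c hl hc S d0).bar (.inr b) = .inr (!b) := rfl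
@[simp] lemma mid2_ini_inl (d : E) :
    (mid2 G v ℓ c hl hc S d0).ini (.inl d) =
      if G.bar d ∈ S then none else some (G.ini d) := rfl
@[simp] lemma mid2_ini_inr (b : Bool) :
    (mid2 G v ℓ c hl hc S d0).ini (.inr b) = if b then none else some v := rfl
@[simp] lemma mid2_label_inl (d : E) :
    (mid2 G v ℓ c hl hc S d0).label (.inl d) =
      if d = d0 then ℓ * G.label d0 * c
        else if d ∈ S then ℓ * G.label d else G.label d := rfl
@[simp] lemma mid2_label_inr (b : Bool) :
    (mid2 G v ℓ c hl hc S d0).label (.inr b) = if b then c else 1 := rfl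

@[simp] lemma mid3_bar_inl (d : E) :
    (mid3 G v e ℓ c hl hc).bar (.inl d) = .inl (G.bar d) := rfl
@[simp] lemma mid3_bar_inr (b : Bool) :
    (mid3 G v e ℓ c hl hc).bar (.inr b) = .inr (!b) := rfl
@[simp] lemma mid3_ini_inl (d : E) :
    (mid3 G v e ℓ c hl hc).ini (.inl d) =
      if d = G.bar e then none
        else if G.bar d ∈ Dset G v e then none else some (G.ini d) := rfl
@[simp] lemma mid3_ini_inr (b : Bool) :
    (mid3 G v e ℓ c hl hc).ini (.inr b) = if b then none else some v := rfl
@[simp] lemma mid3_label_inl (d : E) :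
    (mid3 G v e ℓ c hl hc).label (.inl d) =
      if d = e then ℓ
        else if d ∈ Dset G v e then ℓ * G.label d else G.label d := rfl
@[simp] lemma mid3_label_inr (b : Bool) :
    (mid3 G v e ℓ c hl hc).label (.inr b) = if b then c else 1 := rfl

@[simp] lemma mid4_bar_inl (d : E) :
    (mid4 G v e ℓ c hl hc).bar (.inl d) = .inl (G.bar d) := rfl
@[simp] lemma mid4_bar_inr (b : Bool) :
    (mid4 G v e ℓ c hl hc).bar (.inr b) = .inr (!b) := rfl
@[simp] lemma mid4_ini_inl (d : E) :
    (mid4 G v e ℓ c hl hc).ini (.inl d) =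
      if d = G.bar e then none
        else if G.bar d ∈ Dset G v e then none else some (G.ini d) := rfl
@[simp] lemma mid4_ini_inr (b : Bool) :
    (mid4 G v e ℓ c hl hc).ini (.inr b) = none := rfl
@[simp] lemma mid4_label_inl (d : E) :
    (mid4 G v e ℓ c hl hc).label (.inl d) =
      if d = e then ℓ
        else if d ∈ Dset G v e then ℓ * G.label d else G.label d := rfl
@[simp] lemma mid4_label_inr (b : Bool) :
    (mid4 G v e ℓ c hl hc).label (.inr b) = if b then c * ℓ else 1 := rfl

lemma bar_e_not_mem_Dset : G.bar e ∉ Dset G v e := fun h => h.2.2 rfl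
lemma e_not_mem_Dset : e ∉ Dset G v e := fun h => h.2.1 rfl

lemma expand_eq_mid_empty : G.expand v c hc = mid G v ℓ c hl hc (∅ : Set E) := by
  refine gbs_ext rfl (funext ?_) (funext ?_) <;> rintro (d | b) <;> simp [expand, mid]

end Stage

end GBSGraph
namespace GBSGraph

attribute [local instance] Classical.propDecidable

section Stage2

variable {V E : Type} (G : GBSGraph V E) (v : V) (e : E) (ℓ c : ℤ)
  (hl : ℓ ≠ 0) (hc : c ≠ 0) (S : Set E) (d0 : E)

lemma slide_step1 (h1 : G.ini e = v) (h2 : G.ter e = v) (h3 : G.label (G.bar e) = 1)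
    (hn : G.label e = ℓ * c) (hS : S ⊆ Dset G v e) (hd0 : d0 ∈ Dset G v e)
    (hd0S : d0 ∉ S) :
    SlideMove (mid G v ℓ c hl hc S) (mid2 G v ℓ c hl hc S d0) := by
  obtain ⟨hter, hne, hnbar⟩ := hd0
  have hbarS : G.bar e ∉ S := fun h => (hS h).2.2 rfl
  have heS : e ∉ S := fun h => (hS h).2.1 rfl
  have hterd : G.ini (G.bar d0) = v := hter
  have htere : G.ini (G.bar e) = v := h2
  refine ⟨.inl d0, .inl e, G.label d0, by simp [hne], by simp [hnbar], ?_,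
    G.label_ne d0, ?_, rfl, fun f _ => rfl, ?_, ?_, ?_⟩
  · show (mid G v ℓ c hl hc S).ini ((mid G v ℓ c hl hc S).bar (.inl d0)) = _
    simp [G.bar_invol, hd0S, hbarS, hterd, h1]
  · show _ = G.label d0 * (mid G v ℓ c hl hc S).label ((mid G v ℓ c hl hc S).bar (.inl e))
    simp [hd0S, hbarS, h3]
  · show (mid2 G v ℓ c hl hc S d0).ini (.inl (G.bar d0)) = _
    show _ = (mid G v ℓ c hl hc S).ini ((mid G v ℓ c hl hc S).bar (.inl e))
    simp [G.bar_invol, hd0S, hbarS, hterd, htere, heS]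
  · rintro (g | b) hf
    · have : g ≠ d0 := fun h => hf (by rw [h])
      simp [this]
    · rfl
  · show _ = G.label d0 * (mid G v ℓ c hl hc S).label (.inl e)
    simp [heS, hn]
    ring

lemma slide_step2 (hd0 : d0 ∈ Dset G v e) (hd0S : d0 ∉ S) :
    SlideMove (mid2 G v ℓ c hl hc S d0) (mid G v ℓ c hl hc (insert d0 S)) := by
  obtain ⟨hter, hne, hnbar⟩ := hd0
  have hterd : G.ini (G.bar d0) = v := hter
  refine ⟨.inl d0, .inr false, ℓ * G.label d0, by simp, by simp, ?_,
    mul_ne_zero hl (G.label_ne d0), ?_, rfl, ?_, ?_, ?_, ?_⟩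
  · show (mid2 G v ℓ c hl hc S d0).ini ((mid2 G v ℓ c hl hc S d0).bar (.inl d0)) = _
    simp [G.bar_invol, hd0S, hterd]
  · show _ = ℓ * G.label d0 * (mid2 G v ℓ c hl hc S d0).label
      ((mid2 G v ℓ c hl hc S d0).bar (.inr false))
    simp
  · rintro (g | b) hf
    · rw [mid2_bar_inl] at hf
      have : G.bar g ≠ d0 := fun h => hf (by rw [← h, G.bar_invol])
      simp [this]
    · rfl
  · show (mid G v ℓ c hl hc (insert d0 S)).ini (.inl (G.bar d0)) = _
    show _ = (mid2 G v ℓ c hl hc S d0).ini ((mid2 G v ℓ c hl hc S d0).bar (.inr false))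
    simp [G.bar_invol]
  · rintro (g | b) hf
    · have : g ≠ d0 := fun h => hf (by rw [h])
      simp [this]
    · rfl
  · show (mid G v ℓ c hl hc (insert d0 S)).label (.inl d0) = _
    simp

lemma slide_step3 (h2 : G.ter e = v) (hn : G.label e = ℓ * c) :
    SlideMove (mid G v ℓ c hl hc (Dset G v e)) (mid3 G v e ℓ c hl hc) := by
  have htere : G.ini (G.bar e) = v := h2
  refine ⟨.inl e, .inr false, ℓ, by simp, by simp, ?_, hl, ?_, rfl, ?_, ?_, ?_, ?_⟩
  · show (mid G v ℓ c hl hc _).ini ((mid G v ℓ c hl hc _).bar (.inl e)) = _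
    simp [G.bar_invol, e_not_mem_Dset, htere]
  · show _ = ℓ * (mid G v ℓ c hl hc _).label ((mid G v ℓ c hl hc _).bar (.inr false))
    simp [e_not_mem_Dset, hn]
  · rintro (g | b) hf
    · rw [mid_bar_inl] at hf
      have : g ≠ G.bar e := fun h => hf (by rw [h])
      simp [this]
    · rfl
  · show (mid3 G v e ℓ c hl hc).ini (.inl (G.bar e)) = _
    show _ = (mid G v ℓ c hl hc _).ini ((mid G v ℓ c hl hc _).bar (.inr false))
    simp
  · rintro (g | b) hf
    · have : g ≠ e := fun h => hf (by rw [h])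
      simp [this]
    · rfl
  · show (mid3 G v e ℓ c hl hc).label (.inl e) = _
    simp

lemma slide_step4 (h1 : G.ini e = v) (h3 : G.label (G.bar e) = 1) :
    SlideMove (mid3 G v e ℓ c hl hc) (mid4 G v e ℓ c hl hc) := by
  have hebar : e ≠ G.bar e := fun h => G.bar_ne e h.symm
  have hbare : G.bar e ≠ e := G.bar_ne e
  refine ⟨.inr true, .inl e, c, by simp, by simp, ?_, hc, ?_, rfl, ?_, ?_, ?_, ?_⟩
  · show (mid3 G v e ℓ c hl hc).ini ((mid3 G v e ℓ c hl hc).bar (.inr true)) = _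
    simp [hebar, bar_e_not_mem_Dset, h1]
  · show _ = c * (mid3 G v e ℓ c hl hc).label ((mid3 G v e ℓ c hl hc).bar (.inl e))
    simp [hbare, bar_e_not_mem_Dset, h3]
  · rintro (g | b) hf
    · rfl
    · rw [mid3_bar_inr] at hf
      cases b
      · simp at hf
      · simp
  · show (mid4 G v e ℓ c hl hc).ini (.inr false) = _
    show _ = (mid3 G v e ℓ c hl hc).ini ((mid3 G v e ℓ c hl hc).bar (.inl e))
    simp
  · rintro (g | b) hf
    · rfl
    · cases b
      · simp
      · simp at hf
  · show (mid4 G v e ℓ c hl hc).label (.inr true) = _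
    simp

end Stage2

end GBSGraph
namespace GBSGraph

attribute [local instance] Classical.propDecidable

section Stage3

variable {V E : Type} (G : GBSGraph V E) (v : V) (e : E) (ℓ c : ℤ)
  (hl : ℓ ≠ 0) (hc : c ≠ 0)

/-- The vertex equivalence after contracting the extra vertex. -/
noncomputable def fVe : {x : Option V // x ≠ some v} ≃ V where
  toFun x := x.1.getD v
  invFun w := if h : w = v then ⟨none, by simp⟩ else ⟨some w, by simp [h]⟩
  left_inv := by
    rintro ⟨(_ | w), hx⟩
    · simp
    · have hw : w ≠ v := fun h => hx (by rw [h])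
      simp [hw]
  right_inv := by
    intro w
    by_cases h : w = v <;> simp [h]

/-- The edge equivalence after contracting the extra vertex. -/
noncomputable def fEe (hbe : G.bar e ≠ e) :
    {g : E ⊕ Bool // g ≠ Sum.inl e ∧ g ≠ Sum.inl (G.bar e)} ≃ E where
  toFun x := Sum.elim id (fun b => if b then e else G.bar e) x.1
  invFun d :=
    if h1 : d = e then ⟨.inr true, by simp⟩
    else if h2 : d = G.bar e then ⟨.inr false, by simp⟩
    else ⟨.inl d, by simp [h1, h2]⟩
  left_inv := by
    rintro ⟨(d | b), hx1, hx2⟩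
    · have hd1 : d ≠ e := fun h => hx1 (by rw [h])
      have hd2 : d ≠ G.bar e := fun h => hx2 (by rw [h])
      simp [hd1, hd2]
    · cases b
      · simp [hbe]
      · simp
  right_inv := by
    intro d
    rcases eq_or_ne d e with rfl | h1
    · simp
    · rcases eq_or_ne d (G.bar e) with rfl | h2
      · simp [hbe, h1]
      · simp [h1, h2]

lemma mid4_c1 (h1 : G.ini e = v) :
    (mid4 G v e ℓ c hl hc).ini (.inl e) = some v := by
  have hebar : e ≠ G.bar e := fun h => G.bar_ne e h.symm
  simp [hebar, bar_e_not_mem_Dset, h1]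

lemma mid4_c2 (h1 : G.ini e = v) :
    ∀ g, (mid4 G v e ℓ c hl hc).ini g = some v → g = .inl e := by
  rintro (d | b) hg
  · rw [mid4_ini_inl] at hg
    rcases eq_or_ne d (G.bar e) with rfl | hd1
    · simp at hg
    · by_cases hd2 : G.bar d ∈ Dset G v e
      · simp [hd1, hd2] at hg
      · simp [hd1, hd2] at hg
        by_contra hde
        have hde' : d ≠ e := fun h => hde (by rw [h])
        refine hd2 ⟨?_, ?_, ?_⟩
        · show G.ter (G.bar d) = v
          rw [GBSGraph.ter, G.bar_invol]
          exact hg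
        · intro h
          have := congrArg G.bar h
          rw [G.bar_invol] at this
          exact hd1 this
        · intro h
          have := congrArg G.bar h
          rw [G.bar_invol, G.bar_invol] at this
          exact hde' this
  · rw [mid4_ini_inr] at hg
    exact absurd hg (by simp)

lemma mid4_c3 : (mid4 G v e ℓ c hl hc).ter (.inl e) ≠ some v := by
  show (mid4 G v e ℓ c hl hc).ini (.inl (G.bar e)) ≠ some v
  simp

lemma mid4_c4 (h3 : G.label (G.bar e) = 1) :
    (mid4 G v e ℓ c hl hc).label ((mid4 G v e ℓ c hl hc).bar (.inl e)) = 1 := by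
  show (mid4 G v e ℓ c hl hc).label (.inl (G.bar e)) = 1
  simp [G.bar_ne e, bar_e_not_mem_Dset, h3]

end Stage3

section Stage4

variable {V E : Type} [Finite V] [Finite E] (G : GBSGraph V E) (v : V) (e : E)
  (ℓ c : ℤ) (hl : ℓ ≠ 0) (hc : c ≠ 0)

lemma chain_mid (h1 : G.ini e = v) (h2 : G.ter e = v) (h3 : G.label (G.bar e) = 1)
    (hn : G.label e = ℓ * c) :
    Relation.ReflTransGen (fun X Z => Step18 X Z ∧ Nat.card Z.V ≤ Nat.card V + 1)
      ⟨Option V, E ⊕ Bool, inferInstance, inferInstance, mid G v ℓ c hl hc ∅⟩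
      ⟨Option V, E ⊕ Bool, inferInstance, inferInstance,
        mid G v ℓ c hl hc (Dset G v e)⟩ := by
  have hcard : Nat.card (Option V) ≤ Nat.card V + 1 := le_of_eq Finite.card_option
  refine Set.Finite.induction_on_subset (motive := fun s _ => Relation.ReflTransGen
      (fun X Z => Step18 X Z ∧ Nat.card Z.V ≤ Nat.card V + 1)
      ⟨Option V, E ⊕ Bool, inferInstance, inferInstance, mid G v ℓ c hl hc ∅⟩
      ⟨Option V, E ⊕ Bool, inferInstance, inferInstance, mid G v ℓ c hl hc s⟩)
    (Dset G v e) (Set.toFinite (Dset G v e))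
    Relation.ReflTransGen.refl ?_
  intro a s ha hs hanotin ih
  exact (ih.tail ⟨Step18.slide _ _
      (slide_step1 G v e ℓ c hl hc s a h1 h2 h3 hn hs ha hanotin), hcard⟩).tail
    ⟨Step18.slide _ _ (slide_step2 G v e ℓ c hl hc s a ha hanotin), hcard⟩

end Stage4

end GBSGraph
namespace GBSGraph

attribute [local instance] Classical.propDecidable

lemma mem_Dset {V E : Type} (G : GBSGraph V E) (v : V) (e d : E) :
    d ∈ Dset G v e ↔ G.ter d = v ∧ d ≠ e ∧ d ≠ G.bar e := Iff.rfl

lemma stage {V E : Type} [Finite V] [Finite E] (G : GBSGraph V E) (v : V) (e : E)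
    (ℓ : ℤ) (h1 : G.ini e = v) (h2 : G.ter e = v) (h3 : G.label (G.bar e) = 1)
    (hl : ℓ ≠ 0) (hdvd : ℓ ∣ G.label e) :
    ∃ (Y : BGBS) (fV : Y.V ≃ V) (fE : Y.E ≃ E),
      Relation.ReflTransGen (fun X Z => Step18 X Z ∧ Nat.card Z.V ≤ Nat.card V + 1)
        ⟨V, E, inferInstance, inferInstance, G⟩ Y ∧
      PIso Y.gr (indG G v e ℓ hl) fV fE := by
  obtain ⟨c, hn⟩ := hdvd
  have hc : c ≠ 0 := fun h => G.label_ne e (by rw [hn, h, mul_zero])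
  have hbe : G.bar e ≠ e := G.bar_ne e
  have hcardO : Nat.card (Option V) ≤ Nat.card V + 1 := le_of_eq Finite.card_option
  have hcardC : Nat.card {x : Option V // x ≠ some v} ≤ Nat.card V + 1 := by
    rw [Nat.card_congr (fVe (V := V) v)]
    exact Nat.le_succ _
  refine ⟨⟨{x : Option V // x ≠ some v},
      {g : E ⊕ Bool // g ≠ Sum.inl e ∧ g ≠ (mid4 G v e ℓ c hl hc).bar (Sum.inl e)},
      inferInstance, inferInstance,
      (mid4 G v e ℓ c hl hc).contract (some v) (.inl e) (mid4_c2 G v e ℓ c hl hc h1)⟩,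
    fVe v, fEe G e hbe, ?_, ?_, ?_, ?_⟩
  · -- the chain of moves
    have t0 : Relation.ReflTransGen
        (fun X Z => Step18 X Z ∧ Nat.card Z.V ≤ Nat.card V + 1)
        ⟨V, E, inferInstance, inferInstance, G⟩
        ⟨Option V, E ⊕ Bool, inferInstance, inferInstance, G.expand v c hc⟩ :=
      Relation.ReflTransGen.single ⟨Step18.expand G v c hc, hcardO⟩
    have hgr : G.expand v c hc = mid G v ℓ c hl hc (∅ : Set E) :=
      expand_eq_mid_empty G v ℓ c (hl := hl) (hc := hc)
    have t0' : Relation.ReflTransGen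
        (fun X Z => Step18 X Z ∧ Nat.card Z.V ≤ Nat.card V + 1)
        ⟨V, E, inferInstance, inferInstance, G⟩
        ⟨Option V, E ⊕ Bool, inferInstance, inferInstance,
          mid G v ℓ c hl hc (∅ : Set E)⟩ := by
      rw [← hgr]
      exact t0
    have t1 := t0'.trans (chain_mid G v e ℓ c hl hc h1 h2 h3 hn)
    have t2 := t1.tail ⟨Step18.slide _ _ (slide_step3 G v e ℓ c hl hc h2 hn), hcardO⟩
    have t3 := t2.tail ⟨Step18.slide _ _ (slide_step4 G v e ℓ c hl hc h1 h3), hcardO⟩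
    exact t3.tail ⟨Step18.contract (mid4 G v e ℓ c hl hc) (some v) (.inl e)
      (mid4_c1 G v e ℓ c hl hc h1) (mid4_c2 G v e ℓ c hl hc h1)
      (mid4_c3 G v e ℓ c hl hc) (mid4_c4 G v e ℓ c hl hc h3), hcardC⟩
  · -- bar clause
    rintro ⟨(d | b), hg1, hg2⟩
    · rfl
    · cases b
      · exact (G.bar_invol e).symm
      · rfl
  · -- ini clause
    rintro ⟨(d | b), hg1, hg2⟩
    · rw [mid4_bar_inl] at hg2
      have hd1 : d ≠ e := fun h => hg1 (by rw [h])
      have hd2 : d ≠ G.bar e := fun h => hg2 (by rw [h])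
      show ((mid4 G v e ℓ c hl hc).ini (.inl d)).getD v = G.ini d
      rw [mid4_ini_inl]
      by_cases hdd : G.bar d ∈ Dset G v e
      · rw [if_neg hd2, if_pos hdd]
        have := hdd.1
        rw [GBSGraph.ter, G.bar_invol] at this
        exact this.symm
      · rw [if_neg hd2, if_neg hdd]
        rfl
    · cases b
      · show v = G.ini (G.bar e)
        exact h2.symm
      · show v = G.ini e
        exact h1.symm
  · -- label clause
    rintro ⟨(d | b), hg1, hg2⟩
    · rw [mid4_bar_inl] at hg2
      have hd1 : d ≠ e := fun h => hg1 (by rw [h])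
      have hd2 : d ≠ G.bar e := fun h => hg2 (by rw [h])
      show (mid4 G v e ℓ c hl hc).label (.inl d) = (indG G v e ℓ hl).label d
      rw [mid4_label_inl, indG_label, if_neg hd1]
      by_cases hdd : G.ter d = v
      · rw [if_pos (show d ∈ Dset G v e from ⟨hdd, hd1, hd2⟩), if_pos ⟨hd1, hd2, hdd⟩]
      · rw [if_neg (fun hm => hdd ((mem_Dset G v e d).mp hm).1),
          if_neg (fun hm => hdd hm.2.2)]
    · cases b
      · show (mid4 G v e ℓ c hl hc).label (.inr false) = (indG G v e ℓ hl).label (G.bar e)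
        rw [indG_label, if_neg (fun hm => hm.2.1 rfl)]
        simp [h3]
      · show (mid4 G v e ℓ c hl hc).label (.inr true) = (indG G v e ℓ hl).label e
        rw [indG_label, if_neg (fun hm => hm.1 rfl), hn]
        simp [mul_comm]

end GBSGraph
namespace GBSGraph

lemma factor_dvd_pow {ℓ n : ℤ} (hl : ℓ ≠ 0) (k : ℕ) (h : ℓ ∣ n ^ (k + 1)) :
    ∃ ℓ₁ ℓ₂ : ℤ, ℓ = ℓ₁ * ℓ₂ ∧ ℓ₁ ≠ 0 ∧ ℓ₂ ≠ 0 ∧ ℓ₁ ∣ n ∧ ℓ₂ ∣ n ^ k := by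
  have hgpos : 0 < Int.gcd ℓ n := Int.gcd_pos_of_ne_zero_left n hl
  set g : ℤ := (Int.gcd ℓ n : ℤ) with hgdef
  have hg0 : g ≠ 0 := by
    simpa [hgdef] using hgpos.ne'
  have hgl : g ∣ ℓ := Int.gcd_dvd_left ℓ n
  have hgn : g ∣ n := Int.gcd_dvd_right ℓ n
  obtain ⟨a, ha⟩ := id hgl
  obtain ⟨b, hb⟩ := id hgn
  have ha0 : a ≠ 0 := fun h0 => hl (by rw [ha, h0, mul_zero])
  refine ⟨g, a, ha, hg0, ha0, hgn, ?_⟩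
  have haq : a = ℓ / g := by
    rw [ha, Int.mul_ediv_cancel_left _ hg0]
  have hbq : b = n / g := by
    rw [hb, Int.mul_ediv_cancel_left _ hg0]
  have hcop : IsCoprime a b := by
    rw [Int.isCoprime_iff_gcd_eq_one, haq, hbq]
    exact Int.gcd_div_gcd_div_gcd hgpos
  have hdvd' : a ∣ g ^ k * b ^ (k + 1) := by
    have h2 : g * a ∣ g * (g ^ k * b ^ (k + 1)) := by
      rw [← ha]
      calc ℓ ∣ n ^ (k + 1) := h
        _ = g * (g ^ k * b ^ (k + 1)) := by rw [hb, mul_pow, pow_succ]; ring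
    exact (mul_dvd_mul_iff_left hg0).mp h2
  have : a ∣ g ^ k := (hcop.pow_right (n := k + 1)).dvd_of_dvd_mul_right hdvd'
  exact this.trans (pow_dvd_pow_of_dvd hgn k)

lemma main (k : ℕ) :
    ∀ {V E : Type} [Finite V] [Finite E] (G : GBSGraph V E) (v : V) (e : E) (ℓ : ℤ),
    G.ini e = v → G.ter e = v → G.label (G.bar e) = 1 → ∀ (hl : ℓ ≠ 0),
    ℓ ∣ G.label e ^ k →
    ∃ (Y : BGBS) (fV : Y.V ≃ V) (fE : Y.E ≃ E),
      Relation.ReflTransGen (fun X Z => Step18 X Z ∧ Nat.card Z.V ≤ Nat.card V + 1)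
        ⟨V, E, inferInstance, inferInstance, G⟩ Y ∧
      PIso Y.gr (indG G v e ℓ hl) fV fE := by
  induction k with
  | zero =>
    intro V E _ _ G v e ℓ h1 h2 h3 hl hdvd
    have hd : ℓ ∣ G.label e := (isUnit_of_dvd_one (by simpa using hdvd)).dvd
    exact stage G v e ℓ h1 h2 h3 hl hd
  | succ k ih =>
    intro V E _ _ G v e ℓ h1 h2 h3 hl hdvd
    obtain ⟨ℓ₁, ℓ₂, hfac, hl₁, hl₂, hd₁, hd₂⟩ := factor_dvd_pow hl k hdvd
    subst hfac
    obtain ⟨Y₁, fV₁, fE₁, chain₁, p₁⟩ := stage G v e ℓ₁ h1 h2 h3 hl₁ hd₁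
    haveI := Y₁.finV
    haveI := Y₁.finE
    obtain ⟨pb, pi, pl⟩ := p₁
    set v₁ : Y₁.V := fV₁.symm v with hv₁
    set e₁ : Y₁.E := fE₁.symm e with he₁
    have hfe : fE₁ e₁ = e := fE₁.apply_symm_apply e
    have hfv : fV₁ v₁ = v := fV₁.apply_symm_apply v
    have hbar₁ : fE₁ (Y₁.gr.bar e₁) = G.bar e := by
      rw [pb, hfe]
      rfl
    have hb1 : Y₁.gr.ini e₁ = v₁ := by
      apply fV₁.injective
      rw [pi, hfe, hfv]
      show G.ini e = v
      exact h1
    have hb2 : Y₁.gr.ter e₁ = v₁ := by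
      apply fV₁.injective
      rw [PIso.ter ⟨pb, pi, pl⟩, hfe, hfv]
      show G.ter e = v
      exact h2
    have hb3 : Y₁.gr.label (Y₁.gr.bar e₁) = 1 := by
      rw [pl, hbar₁]
      show (indG G v e ℓ₁ hl₁).label (G.bar e) = 1
      rw [indG_label, if_neg (fun hm => hm.2.1 rfl)]
      exact h3
    have hb4 : Y₁.gr.label e₁ = G.label e := by
      rw [pl, hfe]
      show (indG G v e ℓ₁ hl₁).label e = G.label e
      rw [indG_label, if_neg (fun hm => hm.1 rfl)]
    obtain ⟨Y₂, fV₂, fE₂, chain₂, p₂⟩ :=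
      ih Y₁.gr v₁ e₁ ℓ₂ hb1 hb2 hb3 hl₂ (by rw [hb4]; exact hd₂)
    have hcard : Nat.card Y₁.V = Nat.card V := Nat.card_congr fV₁
    have chain₂' : Relation.ReflTransGen
        (fun X Z => Step18 X Z ∧ Nat.card Z.V ≤ Nat.card V + 1) Y₁ Y₂ := by
      refine Relation.ReflTransGen.mono (fun X Z hz => ⟨hz.1, ?_⟩) _ _ chain₂
      rw [← hcard]
      exact hz.2
    have q := PIso.indG_congr ⟨pb, pi, pl⟩ v₁ e₁ v e ℓ₂ hl₂ hfv hfe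
    rw [indG_indG] at q
    exact ⟨Y₂, fV₂.trans fV₁, fE₂.trans fE₁, chain₁.trans chain₂', p₂.trans q⟩

end GBSGraph
/-- Lemma 4.1 (induction is a derived move): any induction move can be realized
by a sequence of elementary expansions, elementary contractions and slides, in
which every graph occurring in the sequence has at most `|V(Γ)| + 1` vertices. -/
theorem stmt_18 {V E : Type} [Finite V] [Finite E] (G G' : GBSGraph V E)
    (h : GBSGraph.InductionMove G G') :
    ∃ Y : BGBS,
      Relation.ReflTransGen
        (fun X Y => Step18 X Y ∧ Nat.card Y.V ≤ Nat.card V + 1)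
        ⟨V, E, inferInstance, inferInstance, G⟩ Y ∧
      Y.gr.LabelledIso G' := by
  obtain ⟨e, ℓ, k, hie, hbl, hl, hdvd, hbar, hini, hmul, hkeep⟩ := h
  have hG' : G' = GBSGraph.indG G (G.ter e) e ℓ hl := by
    refine GBSGraph.gbs_ext hbar hini (funext fun d => ?_)
    rw [GBSGraph.indG_label]
    split_ifs with hcond
    · exact hmul d hcond.1 hcond.2.1 hcond.2.2
    · rcases Classical.em (d = e) with hde | hde
      · exact hkeep d (Or.inl hde)
      · rcases Classical.em (d = G.bar e) with hdb | hdb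
        · exact hkeep d (Or.inr (Or.inl hdb))
        · refine hkeep d (Or.inr (Or.inr fun hter => ?_))
          exact hcond ⟨hde, hdb, hter⟩
  obtain ⟨Y, fV, fE, chain, piso⟩ :=
    GBSGraph.main k G (G.ter e) e ℓ hie rfl hbl hl hdvd
  exact ⟨Y, chain, by rw [hG']; exact ⟨fV, fE, piso.1, piso.2.1, piso.2.2⟩⟩
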